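/- (Key inequality in the proof of Theorem 2) In any SPIR scheme on a graph G satisfying the system model: if server i is one of the two servers storing message W_k and randomness R_k, then the answer of server i given all the other messages, all the other randomness, and the query randomness is bounded by the entropy of R_k: H(A_i^{[k]} | W_k̄, R_k̄, 𝒬) ≤ H(R_k). -/

import Mathlib

open Finset

noncomputable section

namespace SPIR

variable {Ω : Type} [Fintype Ω]

/-- Probability of an event under the probability mass function `μ`
on the finite sample space `Ω`. -/
def pr (μ : Ω → ℝ) (E : Set Ω) : ℝ := ∑ ω, E.indicator μ ω

/-- Shannon entropy of the random variable `X`, measured in `q`-ary units. -/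
def ent (q : ℕ) (μ : Ω → ℝ) {α : Type*} (X : Ω → α) : ℝ :=
  -∑ ω, μ ω * Real.logb q (pr μ {ω' | X ω' = X ω})

/-- Conditional Shannon entropy `H(X | Y)` in `q`-ary units. -/
def condEnt (q : ℕ) (μ : Ω → ℝ) {α β : Type*} (X : Ω → α) (Y : Ω → β) : ℝ :=
  ent q μ (fun ω => (X ω, Y ω)) - ent q μ Y

/-- Mutual information `I(X ; Y)` in `q`-ary units. -/
def mutInf (q : ℕ) (μ : Ω → ℝ) {α β : Type*} (X : Ω → α) (Y : Ω → β) : ℝ :=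
  ent q μ X + ent q μ Y - ent q μ (fun ω => (X ω, Y ω))

/-- Two random variables have the same (joint) distribution. -/
def IdentDist (μ : Ω → ℝ) {α : Type*} (X Y : Ω → α) : Prop :=
  ∀ s : Set α, pr μ (X ⁻¹' s) = pr μ (Y ⁻¹' s)

/-- Independence of two random variables. -/
def IndepRV (μ : Ω → ℝ) {α β : Type*} (X : Ω → α) (Y : Ω → β) : Prop :=
  ∀ (s : Set α) (t : Set β),
    pr μ (X ⁻¹' s ∩ Y ⁻¹' t) = pr μ (X ⁻¹' s) * pr μ (Y ⁻¹' t)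

/-- A symmetric private information retrieval (SPIR) scheme on a graph-replicated
database, following the system model:  `N` servers are the vertices of a simple graph
whose `K` edges are messages; message `W k` (uniform on `F^L`) and the message-specific
common randomness `R k` are stored exactly at the two endpoints `e1 k`, `e2 k` of
edge `k`.  All Shannon quantities are in `q`-ary units, `q = |F|`. -/
structure Scheme (q N K L : ℕ) (F : Type) [Field F] [Fintype F]
    (Ω : Type) [Fintype Ω] where
  /-- the underlying probability mass function -/
  μ : Ω → ℝ
  μ_nonneg : ∀ ω, 0 ≤ μ ω
  μ_sum : ∑ ω, μ ω = 1
  card_F : Fintype.card F = q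
  /-- first endpoint of each edge (message) -/
  e1 : Fin K → Fin N
  /-- second endpoint of each edge (message) -/
  e2 : Fin K → Fin N
  edge_ne : ∀ k, e1 k ≠ e2 k
  /-- the graph is simple: distinct edges have distinct endpoint sets -/
  edge_inj : ∀ k k', ({e1 k, e2 k} : Set (Fin N)) = {e1 k', e2 k'} → k = k'
  /-- alphabet of the queries -/
  QT : Type
  /-- alphabet of the answers -/
  AT : Type
  /-- alphabet of the common randomness -/
  RT : Type
  /-- alphabet of the user's query randomness -/
  UT : Type
  /-- the messages -/
  W : Fin K → Ω → Fin L → F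
  /-- the message-specific common randomness -/
  R : Fin K → Ω → RT
  /-- the user's query randomness `𝒬` -/
  U : Ω → UT
  /-- `Q n k` : query sent to server `n` when the desired message index is `k` -/
  Q : Fin N → Fin K → Ω → QT
  /-- `A n k` : answer of server `n` when the desired message index is `k` -/
  A : Fin N → Fin K → Ω → AT
  /-- the messages are jointly independent, each uniform on `F^L` -/
  W_unif : ∀ w : Fin K → Fin L → F,
    pr μ {ω | (fun k => W k ω) = w} = (1 / (q : ℝ) ^ L) ^ K
  /-- the common randomness variables are jointly independent of each other and of the
  messages -/
  R_indep : ∀ (s : Fin K → Set RT) (t : Set (Fin K → Fin L → F)),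
    pr μ {ω | (fun k => W k ω) ∈ t ∧ ∀ k, R k ω ∈ s k}
      = pr μ {ω | (fun k => W k ω) ∈ t} * ∏ k, pr μ {ω | R k ω ∈ s k}
  /-- the common randomness variables are identically distributed -/
  R_ident : ∀ k k', IdentDist μ (R k) (R k')
  /-- the user's query randomness is independent of `(𝒲, ℛ)` -/
  U_indep : IndepRV μ U (fun ω => (fun k => W k ω, fun k => R k ω))
  /-- the queries are a deterministic function of `𝒬` -/
  query_det : ∀ k, condEnt q μ (fun ω (n : Fin N) => Q n k ω) U = 0
  /-- the answer of a server is a deterministic function of its query, its stored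
  messages `𝒲ₙ` and its stored randomness `ℛₙ` -/
  answer_det : ∀ n k, condEnt q μ (A n k)
    (fun ω => (Q n k ω,
      fun j : {j : Fin K // e1 j = n ∨ e2 j = n} => W j ω,
      fun j : {j : Fin K // e1 j = n ∨ e2 j = n} => R j ω)) = 0
  /-- user privacy: `(Qₙ^[k], Aₙ^[k], 𝒲ₙ, ℛₙ)` has the same distribution for all `k` -/
  user_privacy : ∀ (n : Fin N) (k k' : Fin K), IdentDist μ
    (fun ω => (Q n k ω, A n k ω,
      fun j : {j : Fin K // e1 j = n ∨ e2 j = n} => W j ω,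
      fun j : {j : Fin K // e1 j = n ∨ e2 j = n} => R j ω))
    (fun ω => (Q n k' ω, A n k' ω,
      fun j : {j : Fin K // e1 j = n ∨ e2 j = n} => W j ω,
      fun j : {j : Fin K // e1 j = n ∨ e2 j = n} => R j ω))
  /-- reliability: the desired message is recovered from all answers and `𝒬` -/
  reliability : ∀ k, condEnt q μ (W k)
    (fun ω => (fun n : Fin N => A n k ω, U ω)) = 0
  /-- database privacy -/
  db_privacy : ∀ (k : Fin K) (J : Set (Fin K)), k ∉ J →
    mutInf q μ (fun ω => fun j : J => W j ω)
      (fun ω => (fun n : Fin N => A n k ω,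
        fun n : Fin N => Q n k ω,
        fun ℓ : {ℓ : Fin K // ℓ ∉ J} => R ℓ ω,
        fun ℓ : {ℓ : Fin K // ℓ ∉ J ∧ ℓ ≠ k} => W ℓ ω,
        U ω)) = 0
  /-- randomness recoverability at each server storing `R j` -/
  rand_recov : ∀ (k j : Fin K) (n : Fin N), (e1 j = n ∨ e2 j = n) →
    condEnt q μ (R j)
      (fun ω => (A n k ω,
        fun m : {m : Fin K // e1 m = n ∨ e2 m = n} => W m ω,
        fun m : {m : Fin K // (e1 m = n ∨ e2 m = n) ∧ m ≠ j} => R m ω,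
        Q n k ω)) = 0

/-- The simple graph underlying an SPIR scheme. -/
def schemeGraph {q N K L : ℕ} {F : Type} [Field F] [Fintype F]
    {Ω : Type} [Fintype Ω] (S : Scheme q N K L F Ω) : SimpleGraph (Fin N) :=
  SimpleGraph.fromRel (fun i j => ∃ k, S.e1 k = i ∧ S.e2 k = j)


section Aux

open Real

variable {μ : Ω → ℝ}
set_option linter.unusedSectionVars false

private lemma indicator_le (hμ0 : ∀ ω, 0 ≤ μ ω) {E F : Set Ω}
    (h : ∀ ω, μ ω ≠ 0 → ω ∈ E → ω ∈ F) (ω : Ω) :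
    E.indicator μ ω ≤ F.indicator μ ω := by
  classical
  rw [Set.indicator_apply, Set.indicator_apply]
  by_cases hE : ω ∈ E
  · rw [if_pos hE]
    by_cases hμ : μ ω = 0
    · rw [hμ]
      split_ifs <;> exact le_refl 0
    · rw [if_pos (h ω hμ hE)]
  · rw [if_neg hE]; split_ifs with hF
    · exact hμ0 ω
    · exact le_refl 0

lemma pr_nonneg (hμ0 : ∀ ω, 0 ≤ μ ω) (E : Set Ω) : 0 ≤ pr μ E :=
  Finset.sum_nonneg fun ω _ => Set.indicator_nonneg (fun ω _ => hμ0 ω) ω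

lemma pr_le_pr (hμ0 : ∀ ω, 0 ≤ μ ω) {E F : Set Ω}
    (h : ∀ ω, μ ω ≠ 0 → ω ∈ E → ω ∈ F) : pr μ E ≤ pr μ F :=
  Finset.sum_le_sum fun ω _ => indicator_le hμ0 h ω

lemma pr_congr {E F : Set Ω} (h : ∀ ω, μ ω ≠ 0 → (ω ∈ E ↔ ω ∈ F)) :
    pr μ E = pr μ F := by
  classical
  refine Finset.sum_congr rfl fun ω _ => ?_
  rw [Set.indicator_apply, Set.indicator_apply]
  by_cases hμ : μ ω = 0
  · split_ifs <;> simp [hμ]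
  · by_cases hE : ω ∈ E
    · rw [if_pos hE, if_pos ((h ω hμ).1 hE)]
    · rw [if_neg hE, if_neg fun hF => hE ((h ω hμ).2 hF)]

lemma pr_univ (hμ1 : ∑ ω, μ ω = 1) : pr μ (Set.univ : Set Ω) = 1 := by
  simp only [pr, Set.indicator_univ]; exact hμ1

lemma le_pr (hμ0 : ∀ ω, 0 ≤ μ ω) {E : Set Ω} {ω₀ : Ω} (h : ω₀ ∈ E) :
    μ ω₀ ≤ pr μ E := by
  have h2 := Finset.single_le_sum (f := fun ω => E.indicator μ ω)
    (fun ω _ => Set.indicator_nonneg (fun ω _ => hμ0 ω) ω) (Finset.mem_univ ω₀)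
  simp only [Set.indicator_of_mem h] at h2
  exact h2

lemma pos_pr (hμ0 : ∀ ω, 0 ≤ μ ω) {E : Set Ω} {ω₀ : Ω} (h : ω₀ ∈ E)
    (hμ : μ ω₀ ≠ 0) : 0 < pr μ E :=
  lt_of_lt_of_le ((hμ0 ω₀).lt_of_ne (Ne.symm hμ)) (le_pr hμ0 h)

lemma pr_add_le (hμ0 : ∀ ω, 0 ≤ μ ω) {E F : Set Ω} {ω₀ : Ω}
    (hEF : ∀ ω, μ ω ≠ 0 → ω ∈ E → ω ∈ F)
    (h₀F : ω₀ ∈ F) (h₀E : ω₀ ∉ E) : pr μ E + μ ω₀ ≤ pr μ F := by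
  classical
  have hrw : pr μ E + μ ω₀ = ∑ ω, (E.indicator μ ω + if ω = ω₀ then μ ω₀ else 0) := by
    rw [Finset.sum_add_distrib, Finset.sum_ite_eq' Finset.univ ω₀ (fun _ => μ ω₀),
      if_pos (Finset.mem_univ ω₀)]
    rfl
  rw [hrw]
  apply Finset.sum_le_sum
  intro ω _
  by_cases hω : ω = ω₀
  · subst hω
    rw [if_pos rfl, Set.indicator_of_notMem h₀E, Set.indicator_of_mem h₀F, zero_add]
  · rw [if_neg hω, add_zero]
    exact indicator_le hμ0 hEF ω

/-- `X` is determined by `Y` almost surely. -/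
def DetOn (μ : Ω → ℝ) {α β : Type*} (X : Ω → α) (Y : Ω → β) : Prop :=
  ∀ ω ω', μ ω ≠ 0 → μ ω' ≠ 0 → Y ω = Y ω' → X ω = X ω'

lemma detOn_self {α : Type*} (X : Ω → α) : DetOn μ X X := fun _ _ _ _ h => h

lemma detOn_comp {α β : Type*} (g : β → α) (Y : Ω → β) :
    DetOn μ (fun ω => g (Y ω)) Y := fun _ _ _ _ h => congrArg g h

lemma DetOn.of_fn {α α' β : Type*} {X : Ω → α} {Y : Ω → β} (h : DetOn μ X Y)
    (g : α → α') : DetOn μ (fun ω => g (X ω)) Y :=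
  fun ω ω' hω hω' hY => congrArg g (h ω ω' hω hω' hY)

lemma DetOn.trans {α β γ : Type*} {X : Ω → α} {Y : Ω → β} {Z : Ω → γ}
    (h1 : DetOn μ X Y) (h2 : DetOn μ Y Z) : DetOn μ X Z :=
  fun ω ω' hω hω' hZ => h1 ω ω' hω hω' (h2 ω ω' hω hω' hZ)

lemma DetOn.pair {α β γ : Type*} {X : Ω → α} {Y : Ω → β} {Z : Ω → γ}
    (h1 : DetOn μ X Z) (h2 : DetOn μ Y Z) :
    DetOn μ (fun ω => (X ω, Y ω)) Z :=
  fun ω ω' hω hω' hZ => by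
    rw [Prod.mk.injEq]; exact ⟨h1 ω ω' hω hω' hZ, h2 ω ω' hω hω' hZ⟩

lemma ent_congr' {q : ℕ} {α β : Type*} {X : Ω → α} {Y : Ω → β}
    (h : ∀ ω ω', μ ω ≠ 0 → μ ω' ≠ 0 → (X ω = X ω' ↔ Y ω = Y ω')) :
    ent q μ X = ent q μ Y := by
  unfold ent
  congr 1
  refine Finset.sum_congr rfl fun ω _ => ?_
  by_cases hμ : μ ω = 0
  · rw [hμ]; ring
  · have hpr : pr μ {ω' | X ω' = X ω} = pr μ {ω' | Y ω' = Y ω} :=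
      pr_congr fun ω' hμ' => h ω' ω hμ' hμ
    rw [hpr]

lemma ent_congr {q : ℕ} {α β : Type*} {X : Ω → α} {Y : Ω → β}
    (h1 : DetOn μ X Y) (h2 : DetOn μ Y X) : ent q μ X = ent q μ Y :=
  ent_congr' fun ω ω' hω hω' =>
    ⟨fun hx => h2 ω ω' hω hω' hx, fun hy => h1 ω ω' hω hω' hy⟩

lemma detOn_of_condEnt_eq_zero {q : ℕ} (hq : 1 < (q : ℝ)) (hμ0 : ∀ ω, 0 ≤ μ ω)
    {α β : Type*} {X : Ω → α} {Y : Ω → β}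
    (h : condEnt q μ X Y = 0) : DetOn μ X Y := by
  classical
  have hsub : ∀ ω ω', μ ω' ≠ 0 → ω' ∈ {ω'' | (X ω'', Y ω'') = (X ω, Y ω)} →
      ω' ∈ {ω'' | Y ω'' = Y ω} := by
    intro ω ω' _ hmem
    have h'' : X ω' = X ω ∧ Y ω' = Y ω := by simpa [Prod.ext_iff] using hmem
    exact h''.2
  have hterm : ∀ ω, 0 ≤ μ ω * (logb q (pr μ {ω' | Y ω' = Y ω})
      - logb q (pr μ {ω' | (X ω', Y ω') = (X ω, Y ω)})) := by
    intro ω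
    by_cases hμ : μ ω = 0
    · rw [hμ]; simp
    · apply mul_nonneg (hμ0 ω)
      rw [sub_nonneg]
      apply Real.logb_le_logb_of_le hq
      · exact pos_pr hμ0 (show ω ∈ {ω'' | (X ω'', Y ω'') = (X ω, Y ω)} from rfl) hμ
      · exact pr_le_pr hμ0 (hsub ω)
  have hsum : ∑ ω, μ ω * (logb q (pr μ {ω' | Y ω' = Y ω})
      - logb q (pr μ {ω' | (X ω', Y ω') = (X ω, Y ω)})) = 0 := by
    have hc : condEnt q μ X Y = ∑ ω, μ ω * (logb q (pr μ {ω' | Y ω' = Y ω})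
        - logb q (pr μ {ω' | (X ω', Y ω') = (X ω, Y ω)})) := by
      have hrw : ∑ ω, μ ω * (logb q (pr μ {ω' | Y ω' = Y ω})
          - logb q (pr μ {ω' | (X ω', Y ω') = (X ω, Y ω)}))
          = ∑ ω, μ ω * logb q (pr μ {ω' | Y ω' = Y ω})
            - ∑ ω, μ ω * logb q (pr μ {ω' | (X ω', Y ω') = (X ω, Y ω)}) := by
        rw [← Finset.sum_sub_distrib]
        exact Finset.sum_congr rfl fun ω _ => mul_sub _ _ _
      have hXY : ent q μ (fun ω => (X ω, Y ω))
          = -∑ ω, μ ω * logb q (pr μ {ω' | (X ω', Y ω') = (X ω, Y ω)}) := rfl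
      have hY : ent q μ Y = -∑ ω, μ ω * logb q (pr μ {ω' | Y ω' = Y ω}) := rfl
      unfold condEnt
      rw [hXY, hY, hrw]
      ring
    rw [← hc, h]
  have hkey : ∀ ω, μ ω ≠ 0 →
      pr μ {ω' | (X ω', Y ω') = (X ω, Y ω)} = pr μ {ω' | Y ω' = Y ω} := by
    intro ω hμ
    have h0 := (Finset.sum_eq_zero_iff_of_nonneg fun ω _ => hterm ω).1 hsum ω
      (Finset.mem_univ ω)
    rcases mul_eq_zero.1 h0 with h1 | h1
    · exact absurd h1 hμ
    · have hxy : (0:ℝ) < pr μ {ω' | (X ω', Y ω') = (X ω, Y ω)} :=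
        pos_pr hμ0 (show ω ∈ {ω'' | (X ω'', Y ω'') = (X ω, Y ω)} from rfl) hμ
      have hy : (0:ℝ) < pr μ {ω' | Y ω' = Y ω} :=
        pos_pr hμ0 (show ω ∈ {ω'' | Y ω'' = Y ω} from rfl) hμ
      have := sub_eq_zero.1 h1
      exact (Real.logb_injOn_pos hq (Set.mem_Ioi.2 hy) (Set.mem_Ioi.2 hxy) this).symm
  intro ω ω' hω hω' hY
  by_contra hne
  have hmemF : ω' ∈ {ω'' | Y ω'' = Y ω} := hY.symm
  have hmemE : ω' ∉ {ω'' | (X ω'', Y ω'') = (X ω, Y ω)} := by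
    intro hmem
    have h'' : X ω' = X ω ∧ Y ω' = Y ω := by simpa [Prod.ext_iff] using hmem
    exact hne h''.1.symm
  have hlt := pr_add_le hμ0 (hsub ω) hmemF hmemE
  rw [hkey ω hω] at hlt
  have : (0:ℝ) < μ ω' := (hμ0 ω').lt_of_ne (Ne.symm hω')
  linarith

lemma condEnt_eq_zero_of_detOn {q : ℕ} {α β : Type*} {X : Ω → α} {Y : Ω → β}
    (h : DetOn μ X Y) : condEnt q μ X Y = 0 := by
  unfold condEnt
  rw [ent_congr (q := q) (h.pair (detOn_self Y)) (detOn_comp Prod.snd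
    (fun ω => (X ω, Y ω)) |>.trans (detOn_self _)), sub_self]

lemma sum_logb_le {q : ℕ} (hq : 1 < (q:ℝ)) (hμ0 : ∀ ω, 0 ≤ μ ω) (hμ1 : ∑ ω, μ ω = 1)
    (f : Ω → ℝ) (hf : ∀ ω, μ ω ≠ 0 → 0 < f ω)
    (hsum : ∑ ω ∈ Finset.univ.filter (fun ω => μ ω ≠ 0), μ ω * f ω ≤ 1) :
    ∑ ω, μ ω * Real.logb q (f ω) ≤ 0 := by
  classical
  set s := Finset.univ.filter (fun ω => μ ω ≠ 0) with hs
  have hres : ∑ ω ∈ s, μ ω * Real.logb q (f ω) = ∑ ω, μ ω * Real.logb q (f ω) :=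
    Finset.sum_filter_of_ne fun ω _ hne => left_ne_zero_of_mul hne
  have hws : ∑ ω ∈ s, μ ω = 1 := by
    rw [← hμ1]
    exact Finset.sum_filter_of_ne fun ω _ hne => hne
  have hmem : ∀ ω ∈ s, f ω ∈ Set.Ioi (0:ℝ) := by
    intro ω hω
    exact Set.mem_Ioi.2 (hf ω (Finset.mem_filter.1 hω).2)
  have hjen : ∑ ω ∈ s, μ ω • Real.log (f ω) ≤ Real.log (∑ ω ∈ s, μ ω • f ω) :=
    (strictConcaveOn_log_Ioi.concaveOn).le_map_sum (fun ω _ => hμ0 ω) hws hmem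
  simp only [smul_eq_mul] at hjen
  have hsum' : ∑ ω ∈ s, μ ω * f ω ≤ 1 := hsum
  have hnn : 0 ≤ ∑ ω ∈ s, μ ω * f ω :=
    Finset.sum_nonneg fun ω hω => mul_nonneg (hμ0 ω) (hf ω (Finset.mem_filter.1 hω).2).le
  have hlog : Real.log (∑ ω ∈ s, μ ω * f ω) ≤ 0 := Real.log_nonpos hnn hsum'
  have hlq : 0 < Real.log q := Real.log_pos hq
  have hnum : ∑ ω ∈ s, μ ω * Real.log (f ω) ≤ 0 := le_trans hjen hlog
  have heq : ∑ ω, μ ω * Real.logb q (f ω) = (∑ ω ∈ s, μ ω * Real.log (f ω)) / Real.log q := by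
    rw [← hres, Finset.sum_div]
    refine Finset.sum_congr rfl fun ω _ => ?_
    rw [Real.logb, mul_div_assoc]
  rw [heq]
  exact div_nonpos_of_nonpos_of_nonneg hnum hlq.le

lemma pr_eq_sum_filter (p : Ω → Prop) [DecidablePred p] :
    pr μ {ω | p ω} = ∑ ω ∈ Finset.univ.filter p, μ ω := by
  unfold pr
  rw [Finset.sum_filter]
  refine Finset.sum_congr rfl fun ω _ => ?_
  by_cases h : p ω
  · rw [if_pos h, Set.indicator_of_mem (show ω ∈ {ω | p ω} from h)]
  · rw [if_neg h, Set.indicator_of_notMem (show ω ∉ {ω | p ω} from h)]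

private lemma sum_marg_le {α γ : Type*} (hμ0 : ∀ ω, 0 ≤ μ ω)
    (X : Ω → α) (Z : Ω → γ) (t : Finset α) (z : γ) :
    ∑ x ∈ t, pr μ {ω | X ω = x ∧ Z ω = z} ≤ pr μ {ω | Z ω = z} := by
  classical
  unfold pr
  rw [Finset.sum_comm]
  apply Finset.sum_le_sum
  intro ω _
  simp only [Set.indicator_apply, Set.mem_setOf_eq]
  by_cases hz : Z ω = z
  · simp only [hz, and_true, if_pos]
    rw [Finset.sum_ite_eq t (X ω) (fun _ => μ ω)]
    split_ifs <;> simp [hμ0 ω]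
  · simp [hz]

private lemma sum_marg_one_le {γ : Type*} (hμ0 : ∀ ω, 0 ≤ μ ω) (hμ1 : ∑ ω, μ ω = 1)
    (Z : Ω → γ) (t : Finset γ) :
    ∑ z ∈ t, pr μ {ω | Z ω = z} ≤ 1 := by
  classical
  unfold pr
  rw [Finset.sum_comm, ← hμ1]
  apply Finset.sum_le_sum
  intro ω _
  simp only [Set.indicator_apply, Set.mem_setOf_eq]
  rw [Finset.sum_ite_eq t (Z ω) (fun _ => μ ω)]
  split_ifs <;> simp [hμ0 ω]

lemma ent_submod {q : ℕ} (hq : 1 < (q:ℝ)) (hμ0 : ∀ ω, 0 ≤ μ ω) (hμ1 : ∑ ω, μ ω = 1)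
    {α β γ : Type*} (X : Ω → α) (Y : Ω → β) (Z : Ω → γ) :
    ent q μ (fun ω => (X ω, Y ω, Z ω)) + ent q μ Z
      ≤ ent q μ (fun ω => (X ω, Z ω)) + ent q μ (fun ω => (Y ω, Z ω)) := by
  classical
  set qz : γ → ℝ := fun z => pr μ {ω | Z ω = z} with hqz
  set qxz : α → γ → ℝ := fun x z => pr μ {ω | X ω = x ∧ Z ω = z} with hqxz
  set qyz : β → γ → ℝ := fun y z => pr μ {ω | Y ω = y ∧ Z ω = z} with hqyz
  set qxyz : α → β → γ → ℝ := fun x y z => pr μ {ω | X ω = x ∧ Y ω = y ∧ Z ω = z} with hqxyz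
  have eZ : ent q μ Z = -∑ ω, μ ω * Real.logb q (qz (Z ω)) := rfl
  have eXZ : ent q μ (fun ω => (X ω, Z ω)) = -∑ ω, μ ω * Real.logb q (qxz (X ω) (Z ω)) := by
    unfold ent
    congr 1
    refine Finset.sum_congr rfl fun ω _ => ?_
    have : {ω' | (X ω', Z ω') = (X ω, Z ω)} = {ω' | X ω' = X ω ∧ Z ω' = Z ω} :=
      Set.ext fun ω' => by rw [Set.mem_setOf_eq, Set.mem_setOf_eq, Prod.mk.injEq]
    rw [this]
  have eYZ : ent q μ (fun ω => (Y ω, Z ω)) = -∑ ω, μ ω * Real.logb q (qyz (Y ω) (Z ω)) := by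
    unfold ent
    congr 1
    refine Finset.sum_congr rfl fun ω _ => ?_
    have : {ω' | (Y ω', Z ω') = (Y ω, Z ω)} = {ω' | Y ω' = Y ω ∧ Z ω' = Z ω} :=
      Set.ext fun ω' => by rw [Set.mem_setOf_eq, Set.mem_setOf_eq, Prod.mk.injEq]
    rw [this]
  have eXYZ : ent q μ (fun ω => (X ω, Y ω, Z ω))
      = -∑ ω, μ ω * Real.logb q (qxyz (X ω) (Y ω) (Z ω)) := by
    unfold ent
    congr 1
    refine Finset.sum_congr rfl fun ω _ => ?_
    have : {ω' | (X ω', Y ω', Z ω') = (X ω, Y ω, Z ω)}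
        = {ω' | X ω' = X ω ∧ Y ω' = Y ω ∧ Z ω' = Z ω} :=
      Set.ext fun ω' => by
        rw [Set.mem_setOf_eq, Set.mem_setOf_eq, Prod.mk.injEq, Prod.mk.injEq]
    rw [this]
  have hposz : ∀ ω, μ ω ≠ 0 → 0 < qz (Z ω) := fun ω h =>
    pos_pr hμ0 (show ω ∈ {ω' | Z ω' = Z ω} from rfl) h
  have hposxz : ∀ ω, μ ω ≠ 0 → 0 < qxz (X ω) (Z ω) := fun ω h =>
    pos_pr hμ0 (show ω ∈ {ω' | X ω' = X ω ∧ Z ω' = Z ω} from ⟨rfl, rfl⟩) h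
  have hposyz : ∀ ω, μ ω ≠ 0 → 0 < qyz (Y ω) (Z ω) := fun ω h =>
    pos_pr hμ0 (show ω ∈ {ω' | Y ω' = Y ω ∧ Z ω' = Z ω} from ⟨rfl, rfl⟩) h
  have hposxyz : ∀ ω, μ ω ≠ 0 → 0 < qxyz (X ω) (Y ω) (Z ω) := fun ω h =>
    pos_pr hμ0 (show ω ∈ {ω' | X ω' = X ω ∧ Y ω' = Y ω ∧ Z ω' = Z ω} from ⟨rfl, rfl, rfl⟩) h
  set f : Ω → ℝ := fun ω =>
    qxz (X ω) (Z ω) * qyz (Y ω) (Z ω) / (qxyz (X ω) (Y ω) (Z ω) * qz (Z ω)) with hfdef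
  have hkey : ∑ ω, μ ω * Real.logb q (f ω) ≤ 0 := by
    apply sum_logb_le hq hμ0 hμ1 f
    · intro ω hμ
      exact div_pos (mul_pos (hposxz ω hμ) (hposyz ω hμ))
        (mul_pos (hposxyz ω hμ) (hposz ω hμ))
    · set s := Finset.univ.filter (fun ω => μ ω ≠ 0) with hs
      set V : Ω → γ × α × β := fun ω => (Z ω, X ω, Y ω) with hV
      have hmaps : ∀ ω ∈ s, V ω ∈ s.image V := fun ω hω => Finset.mem_image_of_mem V hω
      rw [← Finset.sum_fiberwise_of_maps_to hmaps (fun ω => μ ω * f ω)]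
      have hfib : ∀ v ∈ s.image V, ∑ ω ∈ s.filter (fun ω => V ω = v), μ ω * f ω
          = qxz v.2.1 v.1 * qyz v.2.2 v.1 / qz v.1 := by
        rintro ⟨z, x, y⟩ hv
        obtain ⟨ω₀, hω₀, hVω₀⟩ := Finset.mem_image.1 hv
        have hμ₀ : μ ω₀ ≠ 0 := (Finset.mem_filter.1 hω₀).2
        have hz₀ : Z ω₀ = z := congrArg Prod.fst hVω₀
        have hx₀ : X ω₀ = x := congrArg (fun p => p.2.1) hVω₀
        have hy₀ : Y ω₀ = y := congrArg (fun p => p.2.2) hVω₀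
        have hpxyz : 0 < qxyz x y z := by
          rw [← hx₀, ← hy₀, ← hz₀]; exact hposxyz ω₀ hμ₀
        have hpz : 0 < qz z := by rw [← hz₀]; exact hposz ω₀ hμ₀
        have hsum' : ∑ ω ∈ s.filter (fun ω => V ω = (z, x, y)), μ ω = qxyz x y z := by
          have hpr : qxyz x y z
              = ∑ ω ∈ Finset.univ.filter (fun ω => X ω = x ∧ Y ω = y ∧ Z ω = z), μ ω :=
            pr_eq_sum_filter (fun ω => X ω = x ∧ Y ω = y ∧ Z ω = z)
          rw [hpr]
          apply Finset.sum_subset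
          · intro ω hω
            have h2 := Finset.mem_filter.1 hω
            have h3 : V ω = (z, x, y) := h2.2
            have hzz : Z ω = z := congrArg Prod.fst h3
            have hxx : X ω = x := congrArg (fun p => p.2.1) h3
            have hyy : Y ω = y := congrArg (fun p => p.2.2) h3
            exact Finset.mem_filter.2 ⟨Finset.mem_univ ω, ⟨hxx, hyy, hzz⟩⟩
          · intro ω hω hnot
            by_contra hne
            apply hnot
            have hmem2 := (Finset.mem_filter.1 hω).2
            refine Finset.mem_filter.2 ⟨Finset.mem_filter.2 ⟨Finset.mem_univ ω, hne⟩, ?_⟩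
            show V ω = (z, x, y)
            rw [hV]
            simp only [Prod.mk.injEq]
            exact ⟨hmem2.2.2, hmem2.1, hmem2.2.1⟩
        have hconst : ∀ ω ∈ s.filter (fun ω => V ω = (z, x, y)),
            μ ω * f ω = μ ω * (qxz x z * qyz y z / (qxyz x y z * qz z)) := by
          intro ω hω
          have h3 : V ω = (z, x, y) := (Finset.mem_filter.1 hω).2
          have hzz : Z ω = z := congrArg Prod.fst h3
          have hxx : X ω = x := congrArg (fun p => p.2.1) h3
          have hyy : Y ω = y := congrArg (fun p => p.2.2) h3
          rw [hfdef]
          simp only []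
          rw [hzz, hxx, hyy]
        rw [Finset.sum_congr rfl hconst, ← Finset.sum_mul, hsum']
        field_simp
      rw [Finset.sum_congr rfl hfib]
      have hgnn : ∀ v : γ × α × β, 0 ≤ qxz v.2.1 v.1 * qyz v.2.2 v.1 / qz v.1 :=
        fun v => div_nonneg (mul_nonneg (pr_nonneg hμ0 _) (pr_nonneg hμ0 _)) (pr_nonneg hμ0 _)
      have hsubset : s.image V ⊆ (s.image Z) ×ˢ ((s.image X) ×ˢ (s.image Y)) := by
        intro v hv
        obtain ⟨ω₀, hω₀, rfl⟩ := Finset.mem_image.1 hv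
        exact Finset.mem_product.2 ⟨Finset.mem_image_of_mem Z hω₀,
          Finset.mem_product.2 ⟨Finset.mem_image_of_mem X hω₀, Finset.mem_image_of_mem Y hω₀⟩⟩
      refine le_trans (Finset.sum_le_sum_of_subset_of_nonneg hsubset
        fun v _ _ => hgnn v) ?_
      rw [Finset.sum_product]
      have hinner : ∀ z ∈ s.image Z,
          ∑ p ∈ (s.image X) ×ˢ (s.image Y), qxz p.1 z * qyz p.2 z / qz z ≤ qz z := by
        intro z hz
        obtain ⟨ωz, hωz, hZz⟩ := Finset.mem_image.1 hz
        have hqzpos : 0 < qz z := by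
          rw [← hZz]; exact hposz ωz (Finset.mem_filter.1 hωz).2
        rw [Finset.sum_product]
        have hrw : ∀ x ∈ s.image X, ∑ y ∈ s.image Y, qxz x z * qyz y z / qz z
            = qxz x z * (∑ y ∈ s.image Y, qyz y z) / qz z := by
          intro x _
          rw [← Finset.sum_div, ← Finset.mul_sum]
        rw [Finset.sum_congr rfl hrw, ← Finset.sum_div, ← Finset.sum_mul]
        rw [div_le_iff₀ hqzpos]
        have hx := sum_marg_le hμ0 X Z (s.image X) z
        have hy := sum_marg_le hμ0 Y Z (s.image Y) z
        exact mul_le_mul hx hy (Finset.sum_nonneg fun y _ => pr_nonneg hμ0 _) (pr_nonneg hμ0 _)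
      calc ∑ z ∈ s.image Z, ∑ p ∈ (s.image X) ×ˢ (s.image Y), qxz p.1 z * qyz p.2 z / qz z
          ≤ ∑ z ∈ s.image Z, qz z := Finset.sum_le_sum hinner
        _ ≤ 1 := sum_marg_one_le hμ0 hμ1 Z (s.image Z)
  have hexpand : ∑ ω, μ ω * Real.logb q (f ω)
      = ∑ ω, (μ ω * Real.logb q (qxz (X ω) (Z ω)) + μ ω * Real.logb q (qyz (Y ω) (Z ω))
          - μ ω * Real.logb q (qxyz (X ω) (Y ω) (Z ω)) - μ ω * Real.logb q (qz (Z ω))) := by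
    refine Finset.sum_congr rfl fun ω _ => ?_
    by_cases hμ : μ ω = 0
    · rw [hμ]; ring
    · have h1 := hposxz ω hμ
      have h2 := hposyz ω hμ
      have h3 := hposxyz ω hμ
      have h4 := hposz ω hμ
      rw [hfdef]
      simp only []
      rw [Real.logb_div (mul_ne_zero h1.ne' h2.ne') (mul_ne_zero h3.ne' h4.ne'),
        Real.logb_mul h1.ne' h2.ne', Real.logb_mul h3.ne' h4.ne']
      ring
  rw [hexpand] at hkey
  rw [Finset.sum_sub_distrib, Finset.sum_sub_distrib, Finset.sum_add_distrib] at hkey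
  rw [eZ, eXZ, eYZ, eXYZ]
  linarith

lemma ent_const {q : ℕ} (hμ1 : ∑ ω, μ ω = 1) {α : Type*} (c : α) :
    ent q μ (fun _ => c) = 0 := by
  have h1 : ∀ ω : Ω, pr μ {ω' : Ω | (fun _ : Ω => c) ω' = (fun _ : Ω => c) ω} = 1 := by
    intro ω
    have h2 : {ω' : Ω | (fun _ : Ω => c) ω' = (fun _ : Ω => c) ω} = Set.univ := by
      ext ω'; simp
    rw [h2, pr_univ hμ1]
  unfold ent
  simp only [h1, Set.setOf_true, pr_univ hμ1, Real.logb_one, mul_zero,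
    Finset.sum_const_zero, neg_zero]

lemma ent_pair_le {q : ℕ} (hq : 1 < (q:ℝ)) (hμ0 : ∀ ω, 0 ≤ μ ω) (hμ1 : ∑ ω, μ ω = 1)
    {α β : Type*} (X : Ω → α) (Y : Ω → β) :
    ent q μ (fun ω => (X ω, Y ω)) ≤ ent q μ X + ent q μ Y := by
  have h := ent_submod hq hμ0 hμ1 X Y (fun _ => ())
  have c1 : ent q μ (fun ω => (X ω, Y ω, ())) = ent q μ (fun ω => (X ω, Y ω)) :=
    ent_congr' fun ω ω' _ _ => by simp [Prod.ext_iff]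
  have c2 : ent q μ (fun ω => (X ω, ())) = ent q μ X :=
    ent_congr' fun ω ω' _ _ => by simp [Prod.ext_iff]
  have c3 : ent q μ (fun ω => (Y ω, ())) = ent q μ Y :=
    ent_congr' fun ω ω' _ _ => by simp [Prod.ext_iff]
  have c4 : ent q μ (fun _ : Ω => ()) = 0 := ent_const hμ1 ()
  rw [c1, c2, c3, c4] at h
  linarith

lemma ent_eq_sum {q : ℕ} {α : Type*} (X : Ω → α) (t : Finset α)
    (ht : ∀ ω, μ ω ≠ 0 → X ω ∈ t) :
    ent q μ X = -∑ x ∈ t, pr μ {ω | X ω = x} * Real.logb q (pr μ {ω | X ω = x}) := by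
  classical
  set s := Finset.univ.filter (fun ω => μ ω ≠ 0) with hs
  have h1 : ∑ ω, μ ω * Real.logb q (pr μ {ω' | X ω' = X ω})
      = ∑ ω ∈ s, μ ω * Real.logb q (pr μ {ω' | X ω' = X ω}) :=
    (Finset.sum_filter_of_ne fun ω _ hne => left_ne_zero_of_mul hne).symm
  have h2 : ∑ ω ∈ s, μ ω * Real.logb q (pr μ {ω' | X ω' = X ω})
      = ∑ x ∈ t, ∑ ω ∈ s.filter (fun ω => X ω = x),
          μ ω * Real.logb q (pr μ {ω' | X ω' = X ω}) :=
    (Finset.sum_fiberwise_of_maps_to (fun ω hω => ht ω (Finset.mem_filter.1 hω).2) _).symm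
  have h3 : ∀ x ∈ t, ∑ ω ∈ s.filter (fun ω => X ω = x),
      μ ω * Real.logb q (pr μ {ω' | X ω' = X ω})
      = pr μ {ω | X ω = x} * Real.logb q (pr μ {ω | X ω = x}) := by
    intro x _
    have hpr : pr μ {ω | X ω = x} = ∑ ω ∈ s.filter (fun ω => X ω = x), μ ω := by
      rw [pr_eq_sum_filter (fun ω => X ω = x)]
      symm
      apply Finset.sum_subset
      · intro ω hω
        exact Finset.mem_filter.2 ⟨Finset.mem_univ ω, (Finset.mem_filter.1 hω).2⟩
      · intro ω hω hnot
        by_contra hne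
        exact hnot (Finset.mem_filter.2 ⟨Finset.mem_filter.2 ⟨Finset.mem_univ ω, hne⟩,
          (Finset.mem_filter.1 hω).2⟩)
    have hcongr : ∀ ω ∈ s.filter (fun ω => X ω = x),
        μ ω * Real.logb q (pr μ {ω' | X ω' = X ω})
        = μ ω * Real.logb q (pr μ {ω'' | X ω'' = x}) := by
      intro ω hω
      have hx : X ω = x := (Finset.mem_filter.1 hω).2
      rw [hx]
    rw [Finset.sum_congr rfl hcongr, ← Finset.sum_mul, ← hpr]
  unfold ent
  rw [h1, h2]
  congr 1
  exact Finset.sum_congr rfl h3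

lemma ent_comp_identDist {q : ℕ} {τ : Type*} {T T' : Ω → τ} (h : IdentDist μ T T')
    {α : Type*} (f : τ → α) :
    ent q μ (fun ω => f (T ω)) = ent q μ (fun ω => f (T' ω)) := by
  classical
  set t := (Finset.univ.image (fun ω => f (T ω))) ∪ (Finset.univ.image (fun ω => f (T' ω)))
    with htdef
  rw [ent_eq_sum (fun ω => f (T ω)) t (fun ω _ => Finset.mem_union_left _
      (Finset.mem_image_of_mem _ (Finset.mem_univ ω))),
    ent_eq_sum (fun ω => f (T' ω)) t (fun ω _ => Finset.mem_union_right _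
      (Finset.mem_image_of_mem _ (Finset.mem_univ ω)))]
  congr 1
  refine Finset.sum_congr rfl fun x _ => ?_
  have hpr : pr μ {ω | f (T ω) = x} = pr μ {ω | f (T' ω) = x} := h {v | f v = x}
  rw [hpr]

lemma ent_pair_of_indep {q : ℕ} (hμ0 : ∀ ω, 0 ≤ μ ω) {α β : Type*}
    {X : Ω → α} {Y : Ω → β}
    (h : ∀ ω, μ ω ≠ 0 → pr μ {ω' | X ω' = X ω ∧ Y ω' = Y ω}
      = pr μ {ω' | X ω' = X ω} * pr μ {ω' | Y ω' = Y ω}) :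
    ent q μ (fun ω => (X ω, Y ω)) = ent q μ X + ent q μ Y := by
  unfold ent
  rw [← neg_add, ← Finset.sum_add_distrib]
  congr 1
  refine Finset.sum_congr rfl fun ω _ => ?_
  by_cases hμ : μ ω = 0
  · rw [hμ]; ring
  · have hset : {ω' | (X ω', Y ω') = (X ω, Y ω)} = {ω' | X ω' = X ω ∧ Y ω' = Y ω} :=
      Set.ext fun ω' => by rw [Set.mem_setOf_eq, Set.mem_setOf_eq, Prod.mk.injEq]
    have hx : (0:ℝ) < pr μ {ω' | X ω' = X ω} :=
      pos_pr hμ0 (show ω ∈ {ω' | X ω' = X ω} from rfl) hμ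
    have hy : (0:ℝ) < pr μ {ω' | Y ω' = Y ω} :=
      pos_pr hμ0 (show ω ∈ {ω' | Y ω' = Y ω} from rfl) hμ
    rw [hset, h ω hμ, Real.logb_mul hx.ne' hy.ne']
    ring

end Aux

/-- **Key inequality in the proof of Theorem 2.** If server `i` is one of the two
servers storing message `W k` and randomness `R k`, then
`H(A_i^[k] | W_k̄, R_k̄, 𝒬) ≤ H(R k)`. -/
theorem answer_entropy_le_randomness
    {q N K L : ℕ} {F : Type} [Field F] [Fintype F] {Ω : Type} [Fintype Ω]
    (hN : 3 ≤ N) (hK : 2 ≤ K) (hL : 1 ≤ L)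
    (S : Scheme q N K L F Ω) (k : Fin K) (i : Fin N)
    (hi : S.e1 k = i ∨ S.e2 k = i) :
    condEnt q S.μ (S.A i k)
      (fun ω => (fun m : {m : Fin K // m ≠ k} => S.W m ω,
                 fun m : {m : Fin K // m ≠ k} => S.R m ω, S.U ω))
      ≤ ent q S.μ (S.R k) := by
  classical
  have hμ0 := S.μ_nonneg
  have hμ1 := S.μ_sum
  set μ := S.μ with hμdef
  have hqn : 1 < q := by
    rw [← S.card_F]; exact Fintype.one_lt_card
  have hq : 1 < (q : ℝ) := by exact_mod_cast hqn
  -- abbreviations for the random variables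
  set Wk : Ω → Fin L → F := S.W k with hWkdef
  set Rk : Ω → S.RT := S.R k with hRkdef
  set A : Ω → S.AT := S.A i k with hAdef
  set Qi : Ω → S.QT := S.Q i k with hQidef
  set C : Ω → ({m : Fin K // m ≠ k} → Fin L → F) ×
      ({m : Fin K // m ≠ k} → S.RT) × S.UT :=
    fun ω => (fun m : {m : Fin K // m ≠ k} => S.W m ω,
      fun m : {m : Fin K // m ≠ k} => S.R m ω, S.U ω) with hCdef
  set Wloc : Ω → {j : Fin K // S.e1 j = i ∨ S.e2 j = i} → Fin L → F :=
    fun ω j => S.W j ω with hWlocdef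
  set Rloc : Ω → {j : Fin K // S.e1 j = i ∨ S.e2 j = i} → S.RT :=
    fun ω j => S.R j ω with hRlocdef
  set Wl' : Ω → {m : Fin K // (S.e1 m = i ∨ S.e2 m = i) ∧ m ≠ k} → Fin L → F :=
    fun ω m => S.W m ω with hWl'def
  set Rl' : Ω → {m : Fin K // (S.e1 m = i ∨ S.e2 m = i) ∧ m ≠ k} → S.RT :=
    fun ω m => S.R m ω with hRl'def
  set Loc : Ω → S.QT × ({m : Fin K // (S.e1 m = i ∨ S.e2 m = i) ∧ m ≠ k} → Fin L → F) ×
      ({m : Fin K // (S.e1 m = i ∨ S.e2 m = i) ∧ m ≠ k} → S.RT) :=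
    fun ω => (Qi ω, Wl' ω, Rl' ω) with hLocdef
  -- basic determinism facts
  have dQ : DetOn μ (fun ω => (fun n : Fin N => S.Q n k ω)) S.U :=
    detOn_of_condEnt_eq_zero hq hμ0 (S.query_det k)
  have dQi : DetOn μ Qi S.U := fun ω ω' h h' hU => congrFun (dQ ω ω' h h' hU) i
  have dA : DetOn μ A (fun ω => (Qi ω, Wloc ω, Rloc ω)) :=
    detOn_of_condEnt_eq_zero hq hμ0 (S.answer_det i k)
  have dR : DetOn μ Rk (fun ω => (A ω, Wloc ω, Rl' ω, Qi ω)) :=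
    detOn_of_condEnt_eq_zero hq hμ0 (S.rand_recov k k i hi)
  have dLocC : DetOn μ Loc C := by
    intro ω ω' h h' hCeq
    have hW : (fun m : {m : Fin K // m ≠ k} => S.W m ω)
        = (fun m : {m : Fin K // m ≠ k} => S.W m ω') := congrArg Prod.fst hCeq
    have hR : (fun m : {m : Fin K // m ≠ k} => S.R m ω)
        = (fun m : {m : Fin K // m ≠ k} => S.R m ω') :=
      congrArg (fun p => p.2.1) hCeq
    have hU : S.U ω = S.U ω' := congrArg (fun p => p.2.2) hCeq
    simp only [hLocdef, Prod.mk.injEq]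
    refine ⟨dQi ω ω' h h' hU, ?_, ?_⟩
    · funext m; exact congrFun hW ⟨m.1, m.2.2⟩
    · funext m; exact congrFun hR ⟨m.1, m.2.2⟩
  -- given equality of W k and of Wl', all locally stored messages agree
  have buildWloc : ∀ ω ω', Wk ω = Wk ω' → Wl' ω = Wl' ω' → Wloc ω = Wloc ω' := by
    intro ω ω' hWkeq hWl'eq
    funext j
    by_cases hj : (j : Fin K) = k
    · show S.W j ω = S.W j ω'
      rw [hj]
      exact hWkeq
    · exact congrFun hWl'eq ⟨j.1, j.2, hj⟩
  have buildRloc : ∀ ω ω', Rk ω = Rk ω' → Rl' ω = Rl' ω' → Rloc ω = Rloc ω' := by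
    intro ω ω' hRkeq hRl'eq
    funext j
    by_cases hj : (j : Fin K) = k
    · show S.R j ω = S.R j ω'
      rw [hj]
      exact hRkeq
    · exact congrFun hRl'eq ⟨j.1, j.2, hj⟩
  -- ★ : I(Wk ; (A, Loc)) ≤ 0
  have hstar : ent q μ Wk + ent q μ (fun ω => (A ω, Loc ω))
      - ent q μ (fun ω => (Wk ω, (A ω, Loc ω))) ≤ 0 := by
    -- pick another message index
    haveI : Nontrivial (Fin K) := by
      refine ⟨⟨0, by omega⟩, ⟨1, by omega⟩, ?_⟩
      intro hcon
      have := congrArg Fin.val hcon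
      simp at this
    obtain ⟨k', hk'⟩ := exists_ne k
    set A' : Ω → S.AT := S.A i k' with hA'def
    set Qi' : Ω → S.QT := S.Q i k' with hQi'def
    set Loc' : Ω → S.QT ×
        ({m : Fin K // (S.e1 m = i ∨ S.e2 m = i) ∧ m ≠ k} → Fin L → F) ×
        ({m : Fin K // (S.e1 m = i ∨ S.e2 m = i) ∧ m ≠ k} → S.RT) :=
      fun ω => (Qi' ω, Wl' ω, Rl' ω) with hLoc'def
    set Y2 : Ω → S.AT × (S.QT ×
        ({m : Fin K // (S.e1 m = i ∨ S.e2 m = i) ∧ m ≠ k} → Fin L → F) ×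
        ({m : Fin K // (S.e1 m = i ∨ S.e2 m = i) ∧ m ≠ k} → S.RT)) :=
      fun ω => (A' ω, Loc' ω) with hY2def
    -- transfer the unprimed mutual information to the primed one via user privacy
    have hID := S.user_privacy i k k'
    have htrans2 : ent q μ (fun ω => (A ω, Loc ω)) = ent q μ Y2 := by
      have := ent_comp_identDist (q := q) hID
        (fun v => (v.2.1, (v.1,
          fun m : {m : Fin K // (S.e1 m = i ∨ S.e2 m = i) ∧ m ≠ k} => v.2.2.1 ⟨m.1, m.2.1⟩,
          fun m : {m : Fin K // (S.e1 m = i ∨ S.e2 m = i) ∧ m ≠ k} => v.2.2.2 ⟨m.1, m.2.1⟩)))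
      exact this
    have htrans3 : ent q μ (fun ω => (Wk ω, (A ω, Loc ω)))
        = ent q μ (fun ω => (Wk ω, Y2 ω)) := by
      have := ent_comp_identDist (q := q) hID
        (fun v => (v.2.2.1 ⟨k, hi⟩, (v.2.1, (v.1,
          fun m : {m : Fin K // (S.e1 m = i ∨ S.e2 m = i) ∧ m ≠ k} => v.2.2.1 ⟨m.1, m.2.1⟩,
          fun m : {m : Fin K // (S.e1 m = i ∨ S.e2 m = i) ∧ m ≠ k} => v.2.2.2 ⟨m.1, m.2.1⟩))))
      exact this
    -- database privacy for retrieval index k' and J = {k}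
    have hkJ : k' ∉ ({k} : Set (Fin K)) := by simpa using hk'
    have hdb := S.db_privacy k' {k} hkJ
    unfold mutInf at hdb
    set W0 : Ω → (({k} : Set (Fin K)) → Fin L → F) :=
      fun ω => fun j : ({k} : Set (Fin K)) => S.W j ω with hW0def
    set Big : Ω → (Fin N → S.AT) × (Fin N → S.QT) ×
        ({ℓ : Fin K // ℓ ∉ ({k} : Set (Fin K))} → S.RT) ×
        ({ℓ : Fin K // ℓ ∉ ({k} : Set (Fin K)) ∧ ℓ ≠ k'} → Fin L → F) × S.UT :=
      fun ω => (fun n : Fin N => S.A n k' ω,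
        fun n : Fin N => S.Q n k' ω,
        fun ℓ : {ℓ : Fin K // ℓ ∉ ({k} : Set (Fin K))} => S.R ℓ ω,
        fun ℓ : {ℓ : Fin K // ℓ ∉ ({k} : Set (Fin K)) ∧ ℓ ≠ k'} => S.W ℓ ω,
        S.U ω) with hBigdef
    have hdb' : ent q μ W0 + ent q μ Big - ent q μ (fun ω => (W0 ω, Big ω)) = 0 := hdb
    -- W0 carries the same information as Wk
    have dW0Wk : DetOn μ W0 Wk := by
      intro ω ω' h h' hWkeq
      funext j
      have hj : (j : Fin K) = k := j.2
      show S.W j ω = S.W j ω'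
      rw [hj]
      exact hWkeq
    have dWkW0 : DetOn μ Wk W0 := by
      intro ω ω' h h' hW0eq
      exact congrFun hW0eq ⟨k, rfl⟩
    have cW0 : ent q μ W0 = ent q μ Wk := ent_congr dW0Wk dWkW0
    have cW0B : ent q μ (fun ω => (W0 ω, Big ω)) = ent q μ (fun ω => (Wk ω, Big ω)) := by
      apply ent_congr
      · intro ω ω' h h' he
        have h1 : Wk ω = Wk ω' := congrArg Prod.fst he
        have h2 : Big ω = Big ω' := congrArg Prod.snd he
        rw [Prod.mk.injEq]
        exact ⟨dW0Wk ω ω' h h' h1, h2⟩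
      · intro ω ω' h h' he
        have h1 : W0 ω = W0 ω' := congrArg Prod.fst he
        have h2 : Big ω = Big ω' := congrArg Prod.snd he
        rw [Prod.mk.injEq]
        exact ⟨dWkW0 ω ω' h h' h1, h2⟩
    -- reliability lets us append W k' to Big
    have dRel : DetOn μ (S.W k')
        (fun ω => ((fun n : Fin N => S.A n k' ω), S.U ω)) :=
      detOn_of_condEnt_eq_zero hq hμ0 (S.reliability k')
    have dRelB : DetOn μ (S.W k') Big := by
      intro ω ω' h h' he
      apply dRel ω ω' h h'
      have h1 : (fun n : Fin N => S.A n k' ω) = (fun n : Fin N => S.A n k' ω') :=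
        congrArg Prod.fst he
      have h2 : S.U ω = S.U ω' := congrArg (fun p => p.2.2.2.2) he
      rw [Prod.mk.injEq]
      exact ⟨h1, h2⟩
    set B : Ω → _ × (Fin L → F) := fun ω => (Big ω, S.W k' ω) with hBdef
    have cB : ent q μ B = ent q μ Big :=
      ent_congr ((detOn_self Big).pair dRelB)
        (fun ω ω' h h' he => congrArg Prod.fst he)
    have cWkB : ent q μ (fun ω => (Wk ω, B ω)) = ent q μ (fun ω => (Wk ω, Big ω)) := by
      apply ent_congr
      · intro ω ω' h h' he
        have h1 : Wk ω = Wk ω' := congrArg Prod.fst he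
        have h2 : Big ω = Big ω' := congrArg Prod.snd he
        have h3 : S.W k' ω = S.W k' ω' := dRelB ω ω' h h' h2
        rw [Prod.mk.injEq]
        refine ⟨h1, ?_⟩
        rw [hBdef, Prod.mk.injEq]
        exact ⟨h2, h3⟩
      · intro ω ω' h h' he
        have h1 : Wk ω = Wk ω' := congrArg Prod.fst he
        have h2 : B ω = B ω' := congrArg Prod.snd he
        have h3 : Big ω = Big ω' := congrArg Prod.fst h2
        rw [Prod.mk.injEq]
        exact ⟨h1, h3⟩
    -- Y2 is a function of B
    have dYB : DetOn μ Y2 B := by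
      intro ω ω' h h' hBe
      have hBig : Big ω = Big ω' := congrArg Prod.fst hBe
      have hWk' : S.W k' ω = S.W k' ω' := congrArg Prod.snd hBe
      have hAns : (fun n : Fin N => S.A n k' ω) = (fun n : Fin N => S.A n k' ω') :=
        congrArg Prod.fst hBig
      have hQs : (fun n : Fin N => S.Q n k' ω) = (fun n : Fin N => S.Q n k' ω') :=
        congrArg (fun p => p.2.1) hBig
      have hRpart : (fun ℓ : {ℓ : Fin K // ℓ ∉ ({k} : Set (Fin K))} => S.R ℓ ω)
          = (fun ℓ : {ℓ : Fin K // ℓ ∉ ({k} : Set (Fin K))} => S.R ℓ ω') :=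
        congrArg (fun p => p.2.2.1) hBig
      have hWpart : (fun ℓ : {ℓ : Fin K // ℓ ∉ ({k} : Set (Fin K)) ∧ ℓ ≠ k'} => S.W ℓ ω)
          = (fun ℓ : {ℓ : Fin K // ℓ ∉ ({k} : Set (Fin K)) ∧ ℓ ≠ k'} => S.W ℓ ω') :=
        congrArg (fun p => p.2.2.2.1) hBig
      simp only [hY2def, hLoc'def, Prod.mk.injEq]
      refine ⟨congrFun hAns i, congrFun hQs i, ?_, ?_⟩
      · funext m
        by_cases hm : (m : Fin K) = k'
        · show S.W m ω = S.W m ω'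
          rw [hm]
          exact hWk'
        · exact congrFun hWpart ⟨m.1, ⟨fun hmem => m.2.2 hmem, hm⟩⟩
      · funext m
        exact congrFun hRpart ⟨m.1, fun hmem => m.2.2 hmem⟩
    -- data processing : I(Wk ; Y2) ≤ I(Wk ; B)
    have sub1 := ent_submod hq hμ0 hμ1 Wk B Y2
    have c7 : ent q μ (fun ω => (Wk ω, B ω, Y2 ω)) = ent q μ (fun ω => (Wk ω, B ω)) := by
      apply ent_congr
      · intro ω ω' h h' he
        have h1 : Wk ω = Wk ω' := congrArg Prod.fst he
        have h2 : B ω = B ω' := congrArg Prod.snd he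
        have h3 : Y2 ω = Y2 ω' := dYB ω ω' h h' h2
        rw [Prod.mk.injEq]
        refine ⟨h1, ?_⟩
        rw [Prod.mk.injEq]
        exact ⟨h2, h3⟩
      · exact detOn_comp (fun p => (p.1, p.2.1)) (fun ω => (Wk ω, B ω, Y2 ω))
    have c8 : ent q μ (fun ω => (B ω, Y2 ω)) = ent q μ B := by
      apply ent_congr
      · exact (detOn_self B).pair dYB
      · exact fun ω ω' h h' he => congrArg Prod.fst he
    have hWkY2 : ent q μ Wk + ent q μ Y2 - ent q μ (fun ω => (Wk ω, Y2 ω)) ≤ 0 := by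
      have hWkB : ent q μ Wk + ent q μ B - ent q μ (fun ω => (Wk ω, B ω)) = 0 := by
        rw [cB, cWkB, ← cW0, ← cW0B]
        exact hdb'
      linarith [sub1, c7, c8]
    rw [htrans2, htrans3]
    exact hWkY2
  -- determinism transfers between the big tuples
  have eX4X5 : ent q μ (fun ω => (Wk ω, (A ω, Loc ω)))
      = ent q μ (fun ω => ((Wk ω, Rk ω), (A ω, Loc ω))) := by
    apply ent_congr
    · exact detOn_comp (fun p => (p.1.1, p.2)) (fun ω => ((Wk ω, Rk ω), (A ω, Loc ω)))
    · -- Rk is recoverable from (Wk, (A, Loc))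
      intro ω ω' h h' he
      have hWkeq : Wk ω = Wk ω' := congrArg Prod.fst he
      have hAeq : A ω = A ω' := congrArg (fun p => p.2.1) he
      have hLoceq : Loc ω = Loc ω' := congrArg (fun p => p.2.2) he
      have hQieq : Qi ω = Qi ω' := congrArg Prod.fst hLoceq
      have hWl'eq : Wl' ω = Wl' ω' := congrArg (fun p => p.2.1) hLoceq
      have hRl'eq : Rl' ω = Rl' ω' := congrArg (fun p => p.2.2) hLoceq
      have hRkeq : Rk ω = Rk ω' := by
        apply dR ω ω' h h'
        simp only [Prod.mk.injEq]
        exact ⟨hAeq, buildWloc ω ω' hWkeq hWl'eq, hRl'eq, hQieq⟩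
      simp only [Prod.mk.injEq]
      exact ⟨⟨hWkeq, hRkeq⟩, hAeq, hLoceq⟩
  have eX5X6 : ent q μ (fun ω => ((Wk ω, Rk ω), (A ω, Loc ω)))
      = ent q μ (fun ω => ((Wk ω, Rk ω), Loc ω)) := by
    apply ent_congr
    · -- A is determined by ((Wk, Rk), Loc)
      intro ω ω' h h' he
      have hWkRk : (Wk ω, Rk ω) = (Wk ω', Rk ω') := congrArg Prod.fst he
      have hWkeq : Wk ω = Wk ω' := congrArg Prod.fst hWkRk
      have hRkeq : Rk ω = Rk ω' := congrArg Prod.snd hWkRk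
      have hLoceq : Loc ω = Loc ω' := congrArg Prod.snd he
      have hQieq : Qi ω = Qi ω' := congrArg Prod.fst hLoceq
      have hWl'eq : Wl' ω = Wl' ω' := congrArg (fun p => p.2.1) hLoceq
      have hRl'eq : Rl' ω = Rl' ω' := congrArg (fun p => p.2.2) hLoceq
      have hAeq : A ω = A ω' := by
        apply dA ω ω' h h'
        simp only [Prod.mk.injEq]
        exact ⟨hQieq, buildWloc ω ω' hWkeq hWl'eq, buildRloc ω ω' hRkeq hRl'eq⟩
      simp only [Prod.mk.injEq]
      exact ⟨⟨congrArg Prod.fst hWkRk, congrArg Prod.snd hWkRk⟩, hAeq, hLoceq⟩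
    · exact detOn_comp (fun p => (p.1, p.2.2))
        (fun ω => ((Wk ω, Rk ω), (A ω, Loc ω)))
  -- subadditivity
  have hsubadd : ent q μ (fun ω => ((Wk ω, Rk ω), Loc ω))
      ≤ ent q μ (fun ω => (Wk ω, Rk ω)) + ent q μ Loc :=
    ent_pair_le hq hμ0 hμ1 (fun ω => (Wk ω, Rk ω)) Loc
  -- independence of Wk and Rk
  have hind : ent q μ (fun ω => (Wk ω, Rk ω)) = ent q μ Wk + ent q μ Rk := by
    apply ent_pair_of_indep hμ0
    intro ω _
    have h := S.R_indep (fun j => if j = k then ({Rk ω} : Set S.RT) else Set.univ)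
      {w | w k = Wk ω}
    have hL : {ω' | (fun j => S.W j ω') ∈ {w | w k = Wk ω}
        ∧ ∀ j, S.R j ω' ∈ (if j = k then ({Rk ω} : Set S.RT) else Set.univ)}
        = {ω' | Wk ω' = Wk ω ∧ Rk ω' = Rk ω} := by
      ext ω'
      simp only [Set.mem_setOf_eq]
      constructor
      · rintro ⟨h1, h2⟩
        refine ⟨h1, ?_⟩
        have h3 := h2 k
        rw [if_pos rfl] at h3
        exact h3
      · rintro ⟨h1, h2⟩
        refine ⟨h1, fun j => ?_⟩
        by_cases hj : j = k
        · subst hj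
          rw [if_pos rfl]
          exact h2
        · rw [if_neg hj]
          exact Set.mem_univ _
    have hW : {ω' | (fun j => S.W j ω') ∈ {w | w k = Wk ω}} = {ω' | Wk ω' = Wk ω} := rfl
    have hprod : ∏ j, pr μ {ω' | S.R j ω' ∈ (if j = k then ({Rk ω} : Set S.RT) else Set.univ)}
        = pr μ {ω' | Rk ω' = Rk ω} := by
      rw [Finset.prod_eq_single k]
      · have hset : {ω' | S.R k ω' ∈ (if k = k then ({Rk ω} : Set S.RT) else Set.univ)}
            = {ω' | Rk ω' = Rk ω} := by
          rw [if_pos rfl]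
          ext ω'
          simp [Set.mem_singleton_iff, hRkdef]
        rw [hset]
      · intro j _ hj
        have : {ω' | S.R j ω' ∈ (if j = k then ({Rk ω} : Set S.RT) else Set.univ)}
            = Set.univ := by
          rw [if_neg hj]
          ext ω'
          simp
        rw [this, pr_univ hμ1]
      · intro hcon
        exact absurd (Finset.mem_univ k) hcon
    have h' : pr μ {ω' | (fun j => S.W j ω') ∈ {w | w k = Wk ω}
        ∧ ∀ j, S.R j ω' ∈ (if j = k then ({Rk ω} : Set S.RT) else Set.univ)}
        = pr μ {ω' | (fun j => S.W j ω') ∈ {w | w k = Wk ω}}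
          * ∏ j, pr μ {ω' | S.R j ω' ∈ (if j = k then ({Rk ω} : Set S.RT) else Set.univ)} := h
    rw [hL, hW, hprod] at h'
    exact h'
  -- assemble everything
  have f6 : ent q μ (fun ω => (A ω, C ω)) = ent q μ (fun ω => ((A ω, Loc ω), C ω)) := by
    apply ent_congr
    · exact detOn_comp (fun p => (p.1.1, p.2)) (fun ω => ((A ω, Loc ω), C ω))
    · intro ω ω' h h' he
      have hAeq : A ω = A ω' := congrArg Prod.fst he
      have hCeq : C ω = C ω' := congrArg Prod.snd he
      have hLoceq : Loc ω = Loc ω' := dLocC ω ω' h h' hCeq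
      simp only [Prod.mk.injEq]
      exact ⟨⟨hAeq, hLoceq⟩, hCeq⟩
  have sub2 := ent_submod hq hμ0 hμ1 A C Loc
  have c5 : ent q μ (fun ω => (A ω, C ω, Loc ω))
      = ent q μ (fun ω => ((A ω, Loc ω), C ω)) := by
    apply ent_congr
    · exact detOn_comp (fun p => (p.1.1, p.2, p.1.2)) (fun ω => ((A ω, Loc ω), C ω))
    · exact detOn_comp (fun p => ((p.1, p.2.2), p.2.1)) (fun ω => (A ω, C ω, Loc ω))
  have c6 : ent q μ (fun ω => (C ω, Loc ω)) = ent q μ C :=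
    ent_congr ((detOn_self C).pair dLocC) (fun ω ω' h h' he => congrArg Prod.fst he)
  show ent q μ (fun ω => (A ω, C ω)) - ent q μ C ≤ ent q μ Rk
  linarith [f6, sub2, c5, c6, hstar, eX4X5, eX5X6, hsubadd, hind]

end SPIR
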